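/- arXiv:2502.16928 — 13 statements merged into one kernel-verified Lean document; each statement's English description precedes it below -/
import Mathlib

section
/- Let t : ℕ → ℕ and let c, m be integers with c ≥ 2 and m ≥ 2 such that t(k) < c^(k−2) for every integer k ≥ m. Then the series ∑_{k≥0} t(k)·x^k converges at x = c^(−n) for every n ≥ m, and for every integer n ≥ m one has t(n) = ⌊c^(n²) · ∑_{k≥0} t(k)·c^(−n·k)⌋ mod c^n. -/
theorem stmt_1 (t : ℕ → ℕ) (c m : ℕ) (hc : 2 ≤ c) (hm : 2 ≤ m)
    (hbound : ∀ k : ℕ, m ≤ k → t k < c ^ (k - 2)) :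
    ∀ n : ℕ, m ≤ n →
      Summable (fun k : ℕ => (t k : ℝ) * (c : ℝ) ^ (-((n * k : ℕ) : ℤ))) ∧
      (t n : ℤ) =
        ⌊(c : ℝ) ^ (n ^ 2) * ∑' k : ℕ, (t k : ℝ) * (c : ℝ) ^ (-((n * k : ℕ) : ℤ))⌋
          % (c : ℤ) ^ n := by
  intro n hn
  have hn2 : 2 ≤ n := hm.trans hn
  have hc2 : (2:ℝ) ≤ (c:ℝ) := by exact_mod_cast hc
  have hc1 : (1:ℝ) < (c:ℝ) := by linarith
  have hc0 : (0:ℝ) < (c:ℝ) := by linarith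
  set q : ℝ := (c:ℝ)^n with hqdef
  have hq1 : (1:ℝ) < q := one_lt_pow₀ hc1 (by omega)
  have hq0 : (0:ℝ) < q := by linarith
  have hcq : (c:ℝ) < q := by
    calc (c:ℝ) = (c:ℝ)^1 := (pow_one _).symm
    _ < q := pow_lt_pow_right₀ hc1 (by omega)
  have hredef : ∀ k:ℕ, (c:ℝ) ^ (-((n*k:ℕ):ℤ)) = (q⁻¹)^k := by
    intro k
    rw [zpow_neg, zpow_natCast, pow_mul, ← inv_pow]
  have hr0 : (0:ℝ) ≤ (c:ℝ) * q⁻¹ := by positivity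
  have hr1 : (c:ℝ) * q⁻¹ < 1 := by
    rw [mul_inv_lt_iff₀ hq0, one_mul]; exact hcq
  have hs0 : (0:ℝ) ≤ q⁻¹ := by positivity
  have hs1 : q⁻¹ < 1 := by
    rw [inv_lt_one_iff₀]; right; exact hq1
  have hf0 : ∀ k, (0:ℝ) ≤ (t k:ℝ) * (q⁻¹)^k := by
    intro k
    exact mul_nonneg (Nat.cast_nonneg _) (pow_nonneg hs0 _)
  have hsum : Summable (fun k => (t k:ℝ) * (q⁻¹)^k) := by
    rw [← summable_nat_add_iff m]
    refine Summable.of_nonneg_of_le (f := fun k => ((c:ℝ)*q⁻¹)^(k+m)) (fun k => hf0 (k+m)) ?_ ?_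
    · intro k
      have h1 : t (k+m) < c^(k+m-2) := hbound _ (by omega)
      have h2 : c^(k+m-2) ≤ c^(k+m) := Nat.pow_le_pow_right (by omega) (by omega)
      have ht : (t (k+m):ℝ) ≤ (c:ℝ)^(k+m) := by exact_mod_cast (h1.le.trans h2)
      calc (t (k+m):ℝ) * (q⁻¹)^(k+m) ≤ (c:ℝ)^(k+m) * (q⁻¹)^(k+m) :=
            mul_le_mul_of_nonneg_right ht (pow_nonneg hs0 _)
      _ = ((c:ℝ)*q⁻¹)^(k+m) := (mul_pow _ _ _).symm
    · simpa [pow_add] using (summable_geometric_of_lt_one hr0 hr1).mul_right (((c:ℝ)*q⁻¹)^m)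
  refine ⟨(summable_congr (fun k => by rw [hredef])).mpr hsum, ?_⟩
  have hS : (∑' k : ℕ, (t k : ℝ) * (c : ℝ) ^ (-((n * k : ℕ) : ℤ)))
      = ∑' k : ℕ, (t k:ℝ) * (q⁻¹)^k := tsum_congr (fun k => by rw [hredef])
  rw [hS]
  have hpow : (c:ℝ)^(n^2) = q^n := by rw [hqdef, ← pow_mul, sq]
  set g : ℕ → ℝ := fun k => (t k:ℝ) * (q^n * (q⁻¹)^k) with hgdef
  have hg : Summable g := by
    have := hsum.mul_left (q^n)
    apply this.congr
    intro k; simp [hgdef]; ring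
  have hmain : (c:ℝ)^(n^2) * (∑' k : ℕ, (t k:ℝ) * (q⁻¹)^k) = ∑' k, g k := by
    rw [hpow, ← tsum_mul_left]
    exact tsum_congr (fun k => by simp [hgdef]; ring)
  rw [hmain]
  -- split the sum
  have hsplit := Summable.sum_add_tsum_nat_add (n+1) hg
  set A : ℕ := ∑ k ∈ Finset.range (n+1), t k * c ^ (n*(n-k)) with hAdef
  have hA : (A:ℝ) = ∑ k ∈ Finset.range (n+1), g k := by
    rw [hAdef]
    push_cast
    apply Finset.sum_congr rfl
    intro k hk
    have hk' : k ≤ n := by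
      have := Finset.mem_range.mp hk; omega
    have h1 : q^n * (q⁻¹)^k = q^(n-k) := by
      rw [pow_sub₀ _ hq0.ne' hk', inv_pow]
    rw [hgdef]
    simp only []
    rw [h1, hqdef, ← pow_mul]
  set R : ℝ := ∑' j, g (j + (n+1)) with hRdef
  have hkey : ∀ j:ℕ, q^n * (q⁻¹)^(j+(n+1)) = (q⁻¹)^(j+1) := by
    intro j
    have e : j+(n+1) = n + (j+1) := by omega
    rw [e, pow_add, ← mul_assoc, ← mul_pow, mul_inv_cancel₀ hq0.ne', one_pow, one_mul]
  have hgt : Summable (fun j => g (j + (n+1))) := (summable_nat_add_iff (n+1)).mpr hg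
  have hR0 : 0 ≤ R := by
    apply tsum_nonneg
    intro j
    exact mul_nonneg (Nat.cast_nonneg _) (mul_nonneg (pow_nonneg hq0.le _) (pow_nonneg hs0 _))
  have hub : ∀ j:ℕ, g (j + (n+1)) ≤
      (c:ℝ)^(n-1) * q⁻¹ * ((c:ℝ)*q⁻¹)^j - q⁻¹ * (q⁻¹)^j := by
    intro j
    have h1 : (t (j+(n+1)) : ℝ) ≤ (c:ℝ)^(j+(n-1)) - 1 := by
      have hb := hbound (j+(n+1)) (by omega)
      have e : j+(n+1)-2 = j+(n-1) := by omega
      rw [e] at hb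
      have : (t (j+(n+1)) : ℝ) + 1 ≤ (c:ℝ)^(j+(n-1)) := by exact_mod_cast hb
      linarith
    have : g (j + (n+1)) = (t (j+(n+1)) : ℝ) * (q⁻¹)^(j+1) := by
      rw [hgdef]; simp only []; rw [hkey]
    rw [this]
    calc (t (j+(n+1)) : ℝ) * (q⁻¹)^(j+1) ≤ ((c:ℝ)^(j+(n-1)) - 1) * (q⁻¹)^(j+1) :=
          mul_le_mul_of_nonneg_right h1 (pow_nonneg hs0 _)
    _ = (c:ℝ)^(n-1) * q⁻¹ * ((c:ℝ)*q⁻¹)^j - q⁻¹ * (q⁻¹)^j := by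
        rw [pow_add, pow_add, mul_pow, pow_one]; ring
  have hub_sum : Summable (fun j => (c:ℝ)^(n-1) * q⁻¹ * ((c:ℝ)*q⁻¹)^j - q⁻¹ * (q⁻¹)^j) :=
    ((summable_geometric_of_lt_one hr0 hr1).mul_left _).sub
      ((summable_geometric_of_lt_one hs0 hs1).mul_left _)
  have hR1 : R < 1 := by
    have hRle : R ≤ (c:ℝ)^(n-1) * q⁻¹ * (1-(c:ℝ)*q⁻¹)⁻¹ - q⁻¹ * (1-q⁻¹)⁻¹ := by
      calc R ≤ ∑' j, ((c:ℝ)^(n-1) * q⁻¹ * ((c:ℝ)*q⁻¹)^j - q⁻¹ * (q⁻¹)^j) :=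
            Summable.tsum_le_tsum hub hgt hub_sum
      _ = (c:ℝ)^(n-1) * q⁻¹ * (1-(c:ℝ)*q⁻¹)⁻¹ - q⁻¹ * (1-q⁻¹)⁻¹ := by
          rw [Summable.tsum_sub ((summable_geometric_of_lt_one hr0 hr1).mul_left _)
              ((summable_geometric_of_lt_one hs0 hs1).mul_left _),
            tsum_mul_left, tsum_mul_left,
            tsum_geometric_of_lt_one hr0 hr1, tsum_geometric_of_lt_one hs0 hs1]
    have key2 : (c:ℝ)^(n-1) + c ≤ q := by
      have e : q = (c:ℝ) * (c:ℝ)^(n-1) := by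
        rw [hqdef, ← pow_succ']
        congr 1; omega
      have hcle : (c:ℝ) ≤ (c:ℝ)^(n-1) := by
        calc (c:ℝ) = (c:ℝ)^1 := (pow_one _).symm
        _ ≤ (c:ℝ)^(n-1) := pow_le_pow_right₀ hc1.le (by omega)
      nlinarith
    have hX : (0:ℝ) < 1 - (c:ℝ)*q⁻¹ := by linarith
    have h1x : (c:ℝ)^(n-1) * q⁻¹ ≤ 1 - (c:ℝ)*q⁻¹ := by
      have := mul_le_mul_of_nonneg_right key2 hs0
      rw [add_mul, mul_inv_cancel₀ hq0.ne'] at this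
      linarith
    have h2x : (c:ℝ)^(n-1) * q⁻¹ * (1-(c:ℝ)*q⁻¹)⁻¹ ≤ 1 := by
      calc (c:ℝ)^(n-1) * q⁻¹ * (1-(c:ℝ)*q⁻¹)⁻¹ ≤ (1-(c:ℝ)*q⁻¹) * (1-(c:ℝ)*q⁻¹)⁻¹ :=
            mul_le_mul_of_nonneg_right h1x (inv_nonneg.mpr hX.le)
      _ = 1 := mul_inv_cancel₀ hX.ne'
    have h3x : 0 < q⁻¹ * (1-q⁻¹)⁻¹ := by
      apply mul_pos (inv_pos.mpr hq0)
      apply inv_pos.mpr; linarith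
    linarith
  -- floor
  have hfloor : ⌊∑' k, g k⌋ = (A:ℤ) := by
    rw [← hsplit, ← hA]
    rw [Int.floor_eq_iff]
    constructor
    · push_cast; linarith
    · push_cast; linarith
  rw [hfloor]
  -- mod computation
  have hAsplit : A = (∑ k ∈ Finset.range n, t k * c ^ (n*(n-k))) + t n := by
    rw [hAdef, Finset.sum_range_succ]
    simp
  have hdvd : c^n ∣ ∑ k ∈ Finset.range n, t k * c ^ (n*(n-k)) := by
    apply Finset.dvd_sum
    intro k hk
    have hk' : k < n := Finset.mem_range.mp hk
    apply Dvd.dvd.mul_left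
    apply pow_dvd_pow
    calc n = n * 1 := (mul_one n).symm
    _ ≤ n * (n-k) := Nat.mul_le_mul_left n (by omega)
  obtain ⟨B, hB⟩ := hdvd
  have hAeq : (A:ℤ) = t n + c^n * B := by
    rw [hAsplit, hB]; push_cast; ring
  rw [hAeq, Int.add_mul_emod_self_left]
  have htn : t n < c^n := by
    have h1 := hbound n hn
    have h2 : c^(n-2) ≤ c^n := Nat.pow_le_pow_right (by omega) (by omega)
    omega
  rw [Int.emod_eq_of_lt (by positivity) (by exact_mod_cast htn)]
end

section
/- Let t : ℕ → ℕ and let c be an integer with c ≥ 8 such that t(k)³ < c^k (equivalently, t(k) < c^(k/3)) for every integer k ≥ 1. Then for every integer n ≥ 1 one has t(n) = ⌊c^(n²) · ∑_{k≥0} t(k)·c^(−n·k)⌋ mod c^n. -/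
theorem stmt_2 (t : ℕ → ℕ) (c : ℕ) (hc : 8 ≤ c)
    (hbound : ∀ k : ℕ, 1 ≤ k → (t k) ^ 3 < c ^ k) :
    ∀ n : ℕ, 1 ≤ n →
      (t n : ℤ) =
        ⌊(c : ℝ) ^ (n ^ 2) * ∑' k : ℕ, (t k : ℝ) * (c : ℝ) ^ (-((n * k : ℕ) : ℤ))⌋
          % (c : ℤ) ^ n := by
  intro n hn
  have hc0 : (0:ℝ) < (c:ℝ) := by positivity
  have hc1 : (1:ℝ) < (c:ℝ) := by exact_mod_cast lt_of_lt_of_le (by norm_num) hc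
  have hcne : (c:ℝ) ≠ 0 := ne_of_gt hc0
  -- key nat bound 1: for k ≥ 1, t k * 2^k < c^(n*k)
  have key1 : ∀ k : ℕ, 1 ≤ k → t k * 2 ^ k < c ^ (n * k) := by
    intro k hk
    rw [← Nat.pow_lt_pow_iff_left (n := 3) (by norm_num)]
    calc (t k * 2 ^ k) ^ 3 = t k ^ 3 * 8 ^ k := by
          rw [mul_pow, ← pow_mul, mul_comm k 3, pow_mul]; norm_num
      _ < c ^ k * 8 ^ k := by
          exact mul_lt_mul_of_pos_right (hbound k hk) (by positivity)
      _ ≤ c ^ k * c ^ k := by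
          exact Nat.mul_le_mul_left _ (Nat.pow_le_pow_left hc k)
      _ = c ^ (2 * k) := by rw [← pow_add]; ring_nf
      _ ≤ c ^ (3 * (n * k)) := by
          apply Nat.pow_le_pow_right (by omega)
          nlinarith [hn, hk]
      _ = (c ^ (n * k)) ^ 3 := by rw [← pow_mul]; ring_nf
  -- key nat bound 2: tail terms
  have key2 : ∀ j : ℕ, t (j + (n + 1)) * 2 ^ (j + 1) < c ^ (n * (j + 1)) := by
    intro j
    rw [← Nat.pow_lt_pow_iff_left (n := 3) (by norm_num)]
    calc (t (j + (n+1)) * 2 ^ (j+1)) ^ 3 = t (j + (n+1)) ^ 3 * 8 ^ (j+1) := by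
          rw [mul_pow, ← pow_mul, mul_comm (j+1) 3, pow_mul]; norm_num
      _ < c ^ (j + (n+1)) * 8 ^ (j+1) := by
          exact mul_lt_mul_of_pos_right (hbound _ (by omega)) (by positivity)
      _ ≤ c ^ (j + (n+1)) * c ^ (j+1) := by
          exact Nat.mul_le_mul_left _ (Nat.pow_le_pow_left hc _)
      _ = c ^ (j + (n+1) + (j+1)) := by rw [← pow_add]
      _ ≤ c ^ (3 * (n * (j + 1))) := by
          apply Nat.pow_le_pow_right (by omega)
          nlinarith [hn]
      _ = (c ^ (n * (j+1))) ^ 3 := by rw [← pow_mul]; ring_nf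
  set f : ℕ → ℝ := fun k => (t k : ℝ) * (c : ℝ) ^ (-((n * k : ℕ) : ℤ)) with hfdef
  have hf_eq : ∀ k, f k = (t k : ℝ) / (c : ℝ) ^ (n * k) := by
    intro k
    rw [hfdef]
    simp only [zpow_neg, zpow_natCast]
    rw [div_eq_mul_inv]
  have hf_nonneg : ∀ k, 0 ≤ f k := by
    intro k; rw [hf_eq]; positivity
  have hf_lt : ∀ k, 1 ≤ k → f k < (1/2 : ℝ) ^ k := by
    intro k hk
    rw [hf_eq, div_lt_iff₀ (by positivity), div_pow, one_pow, div_mul_eq_mul_div,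
      lt_div_iff₀ (by positivity), one_mul]
    exact_mod_cast key1 k hk
  have hsum : Summable f := by
    rw [← summable_nat_add_iff 1]
    apply Summable.of_nonneg_of_le (fun j => hf_nonneg _)
      (fun j => (hf_lt (j + 1) (by omega)).le)
    exact (summable_geometric_of_lt_one (by norm_num) (by norm_num)).comp_injective
      (add_left_injective 1)
  have hsplit := Summable.sum_add_tsum_nat_add (n + 1) hsum
  set A : ℕ := ∑ k ∈ Finset.range (n + 1), t k * c ^ (n * (n - k)) with hAdef
  set T : ℝ := ∑' j : ℕ, (t (j + (n + 1)) : ℝ) / (c : ℝ) ^ (n * (j + 1)) with hTdef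
  have hmain : (c : ℝ) ^ (n ^ 2) * ∑' k, f k = (A : ℝ) + T := by
    rw [← hsplit, mul_add]
    congr 1
    · rw [Finset.mul_sum, hAdef]
      push_cast
      apply Finset.sum_congr rfl
      intro k hk
      have hk' : k ≤ n := by
        have := Finset.mem_range.mp hk; omega
      have hsplitpow : (c:ℝ) ^ (n ^ 2) = (c:ℝ) ^ (n * (n - k)) * (c:ℝ) ^ (n * k) := by
        rw [← pow_add]
        congr 1
        have : n * (n - k) + n * k = n * ((n - k) + k) := by ring
        rw [this, Nat.sub_add_cancel hk', ← pow_two]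
      rw [hf_eq, hsplitpow]
      field_simp
    · rw [← tsum_mul_left, hTdef]
      apply tsum_congr
      intro j
      rw [hf_eq]
      have hsplitpow : (c:ℝ) ^ (n * (j + (n + 1))) = (c:ℝ) ^ (n ^ 2) * (c:ℝ) ^ (n * (j + 1)) := by
        rw [← pow_add]
        congr 1
        ring
      rw [hsplitpow]
      rw [eq_div_iff (by positivity)]
      field_simp
  have hterm : ∀ j : ℕ, (t (j + (n + 1)) : ℝ) / (c : ℝ) ^ (n * (j + 1)) < (1/2 : ℝ) ^ (j + 1) := by
    intro j
    rw [div_lt_iff₀ (by positivity), div_pow, one_pow, div_mul_eq_mul_div,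
      lt_div_iff₀ (by positivity), one_mul]
    exact_mod_cast key2 j
  have hgsum : Summable (fun j : ℕ => (1/2 : ℝ) ^ (j + 1)) :=
    (summable_geometric_of_lt_one (by norm_num) (by norm_num)).comp_injective
      (add_left_injective 1)
  have hT0 : 0 ≤ T := tsum_nonneg (fun j => by positivity)
  have hT1 : T < 1 := by
    have h := Summable.tsum_lt_tsum_of_nonneg (fun j => by positivity)
      (fun j => (hterm j).le) (hterm 0) hgsum
    rw [hTdef]
    refine lt_of_lt_of_le h ?_
    have hgeo := tsum_geometric_of_lt_one (by norm_num : (0:ℝ) ≤ 1/2) (by norm_num)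
    have : ∑' j : ℕ, (1/2 : ℝ) ^ (j + 1) = 1 := by
      calc ∑' j : ℕ, (1/2 : ℝ) ^ (j + 1) = ∑' j : ℕ, (1/2 : ℝ) * (1/2) ^ j := by
            apply tsum_congr; intro j; rw [pow_succ]; ring
        _ = (1/2) * ∑' j : ℕ, (1/2 : ℝ) ^ j := tsum_mul_left
        _ = 1 := by rw [hgeo]; norm_num
    rw [this]
  have hfloor : ⌊(c : ℝ) ^ (n ^ 2) * ∑' k, f k⌋ = (A : ℤ) := by
    rw [hmain]
    rw [Int.floor_eq_iff]
    constructor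
    · push_cast; linarith
    · push_cast; linarith
  rw [hfloor]
  -- now compute A % c^n = t n
  have hAsplit : A = (∑ k ∈ Finset.range n, t k * c ^ (n * (n - k) - n)) * c ^ n + t n := by
    rw [hAdef, Finset.sum_range_succ, Nat.sub_self, Nat.mul_zero, pow_zero, mul_one,
      Finset.sum_mul]
    congr 1
    apply Finset.sum_congr rfl
    intro k hk
    have hk' : k < n := Finset.mem_range.mp hk
    have h1 : n ≤ n * (n - k) := by
      calc n = n * 1 := (mul_one n).symm
        _ ≤ n * (n - k) := Nat.mul_le_mul_left n (by omega)
    rw [mul_assoc, ← pow_add, Nat.sub_add_cancel h1]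
  have htn : t n < c ^ n := by
    have h := hbound n hn
    calc t n ≤ t n ^ 3 := Nat.le_self_pow (by norm_num) _
      _ < c ^ n := h
  have : (A : ℤ) % (c : ℤ) ^ n = (t n : ℤ) := by
    rw [hAsplit]
    push_cast
    rw [add_comm, mul_comm, Int.add_mul_emod_self_left]
    exact Int.emod_eq_of_lt (by positivity) (by exact_mod_cast htn)
  omega
end

section
/- Let t : ℕ → ℕ and let c, m be integers with c ≥ 2 and m ≥ 2 such that t(k) < c^(k−2) for every integer k ≥ m. Then for every integer e ≥ c and every integer n ≥ m one has t(n) = ⌊e^(n²) · ∑_{k≥0} t(k)·e^(−n·k)⌋ mod e^n. (That is, if the floor-mod extraction representation holds for base c for all n ≥ m, it also holds for every larger base.) -/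
theorem stmt_3 (t : ℕ → ℕ) (c m : ℕ) (hc : 2 ≤ c) (hm : 2 ≤ m)
    (hbound : ∀ k : ℕ, m ≤ k → t k < c ^ (k - 2)) :
    ∀ e : ℕ, c ≤ e → ∀ n : ℕ, m ≤ n →
      (t n : ℤ) =
        ⌊(e : ℝ) ^ (n ^ 2) * ∑' k : ℕ, (t k : ℝ) * (e : ℝ) ^ (-((n * k : ℕ) : ℤ))⌋
          % (e : ℤ) ^ n := by
  intro e he n hn
  have he2 : 2 ≤ e := le_trans hc he
  have hn2 : 2 ≤ n := le_trans hm hn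
  set E : ℝ := (e : ℝ) with hEdef
  have hE2 : (2:ℝ) ≤ E := by rw [hEdef]; exact_mod_cast he2
  have hE1 : (1:ℝ) < E := by linarith
  have hE0 : (0:ℝ) < E := by linarith
  have hEne : E ≠ 0 := ne_of_gt hE0
  -- bound with base e
  have hbe : ∀ k, m ≤ k → t k < e ^ (k - 2) := fun k hk =>
    lt_of_lt_of_le (hbound k hk) (Nat.pow_le_pow_left he _)
  set F : ℕ → ℝ := fun k => (t k : ℝ) * E ^ ((n ^ 2 : ℤ) - (n : ℤ) * k) with hF
  -- Step 1: pull the factor inside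
  have h1 : E ^ (n ^ 2) * ∑' k : ℕ, (t k : ℝ) * E ^ (-((n * k : ℕ) : ℤ))
      = ∑' k : ℕ, F k := by
    rw [← tsum_mul_left]
    refine tsum_congr fun k => ?_
    have h2 : (n ^ 2 : ℤ) - (n : ℤ) * k = ((n ^ 2 : ℕ) : ℤ) + (-((n * k : ℕ) : ℤ)) := by
      push_cast; ring
    show E ^ (n ^ 2) * ((t k : ℝ) * E ^ (-((n * k : ℕ) : ℤ)))
        = (t k : ℝ) * E ^ ((n ^ 2 : ℤ) - (n : ℤ) * k)
    rw [h2, zpow_add₀ hEne, zpow_natCast]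
    ring
  -- geometric bound for the tail
  set r : ℝ := E ^ ((1 : ℤ) - n) with hr
  have hr0 : 0 ≤ r := (zpow_pos hE0 _).le
  have hrE : r ≤ E⁻¹ := by
    rw [hr, show (E⁻¹ : ℝ) = E ^ (-1 : ℤ) by simp]
    exact zpow_le_zpow_right₀ hE1.le (by omega)
  have hEinv : E⁻¹ ≤ 1/2 := by
    rw [inv_le_comm₀ hE0 (by norm_num)]
    linarith
  have hEinv0 : 0 < E⁻¹ := inv_pos.mpr hE0
  have hr1 : r < 1 := lt_of_le_of_lt hrE (by linarith)
  have hg : Summable (fun j : ℕ => E⁻¹ * r ^ j) :=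
    (summable_geometric_of_lt_one hr0 hr1).mul_left E⁻¹
  -- tail terms
  have htail_eq : ∀ j : ℕ, F (j + (n+1))
      = (t (j + n + 1) : ℝ) * E ^ (-((n : ℤ) * j) - n) := by
    intro j
    rw [hF]
    have : j + (n + 1) = j + n + 1 := by ring
    rw [this]
    show (t (j + n + 1) : ℝ) * E ^ ((n ^ 2 : ℤ) - (n : ℤ) * (j + n + 1))
        = (t (j + n + 1) : ℝ) * E ^ (-((n : ℤ) * j) - n)
    congr 1
    push_cast
    ring
  have hgj : ∀ j : ℕ, E⁻¹ * r ^ j = E ^ ((-1 : ℤ) + (1 - n) * j) := by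
    intro j
    rw [hr, ← zpow_natCast (E ^ ((1:ℤ) - n)) j, ← zpow_mul, zpow_add₀ hEne]
    simp [mul_comm]
  have htb : ∀ j : ℕ, (t (j + n + 1) : ℝ) < E ^ ((j + n - 1 : ℕ)) := by
    intro j
    have h1 : t (j + n + 1) < e ^ (j + n + 1 - 2) := hbe _ (by omega)
    have h2 : j + n + 1 - 2 = j + n - 1 := by omega
    rw [h2] at h1
    calc (t (j + n + 1) : ℝ) < ((e ^ (j + n - 1) : ℕ) : ℝ) := by exact_mod_cast h1
      _ = E ^ (j + n - 1) := by push_cast; rfl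
  have hexp : ∀ j : ℕ, E ^ ((j + n - 1 : ℕ)) * E ^ (-((n : ℤ) * j) - n)
      = E⁻¹ * r ^ j := by
    intro j
    rw [hgj j, ← zpow_natCast E (j + n - 1), ← zpow_add₀ hEne]
    congr 1
    have : ((j + n - 1 : ℕ) : ℤ) = (j : ℤ) + n - 1 := by omega
    rw [this]
    ring
  have hterm : ∀ j : ℕ, F (j + (n+1)) ≤ E⁻¹ * r ^ j := by
    intro j
    rw [htail_eq j, ← hexp j]
    exact mul_le_mul_of_nonneg_right (htb j).le (zpow_nonneg hE0.le _)
  have htermpos : ∀ j : ℕ, 0 ≤ F (j + (n+1)) := by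
    intro j
    rw [htail_eq j]
    exact mul_nonneg (Nat.cast_nonneg _) (zpow_nonneg hE0.le _)
  have htailsum : Summable (fun j : ℕ => F (j + (n+1))) :=
    Summable.of_nonneg_of_le htermpos hterm hg
  have hFsum : Summable F := (summable_nat_add_iff (n+1)).mp htailsum
  set T : ℝ := ∑' j : ℕ, F (j + (n+1)) with hT
  have hT0 : 0 ≤ T := tsum_nonneg htermpos
  -- strict inequality at j = 0
  have hstrict : F (0 + (n+1)) < E⁻¹ * r ^ 0 := by
    rw [htail_eq 0, ← hexp 0]
    refine mul_lt_mul_of_pos_right (htb 0) (zpow_pos hE0 _)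
  have hT1 : T < 1 := by
    have hlt : T < ∑' j : ℕ, E⁻¹ * r ^ j :=
      Summable.tsum_lt_tsum hterm hstrict htailsum hg
    have hsum : ∑' j : ℕ, E⁻¹ * r ^ j = E⁻¹ * (1 - r)⁻¹ := by
      rw [tsum_mul_left, tsum_geometric_of_lt_one hr0 hr1]
    have h1r : E⁻¹ ≤ 1 - r := by linarith
    have h1r0 : (0:ℝ) < 1 - r := by linarith
    have : E⁻¹ * (1 - r)⁻¹ ≤ 1 := by
      calc E⁻¹ * (1 - r)⁻¹ ≤ (1 - r) * (1 - r)⁻¹ :=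
            mul_le_mul_of_nonneg_right h1r (inv_nonneg.mpr h1r0.le)
        _ = 1 := mul_inv_cancel₀ (ne_of_gt h1r0)
    calc T < ∑' j : ℕ, E⁻¹ * r ^ j := hlt
      _ = E⁻¹ * (1 - r)⁻¹ := hsum
      _ ≤ 1 := this
  -- the front sum is a natural number
  set A : ℕ := ∑ k ∈ Finset.range (n+1), t k * e ^ (n*n - n*k) with hA
  have hfront : ∑ k ∈ Finset.range (n+1), F k = (A : ℝ) := by
    rw [hA]
    push_cast
    refine Finset.sum_congr rfl fun k hk => ?_
    have hk' : k ≤ n := Nat.lt_succ_iff.mp (Finset.mem_range.mp hk)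
    have hle : n * k ≤ n * n := Nat.mul_le_mul_left n hk'
    have h3 : (n ^ 2 : ℤ) - (n:ℤ) * k = ((n*n - n*k : ℕ) : ℤ) := by
      push_cast [hle]; ring
    show (t k : ℝ) * E ^ ((n ^ 2 : ℤ) - (n : ℤ) * k) = (t k : ℝ) * (e:ℝ) ^ (n*n - n*k)
    rw [h3, zpow_natCast]
  -- split the sum
  have hsplit : ∑' k : ℕ, F k = (A : ℝ) + T := by
    rw [← Summable.sum_add_tsum_nat_add (n+1) hFsum, hfront]
  -- compute the floor
  have hfloor : ⌊E ^ (n ^ 2) * ∑' k : ℕ, (t k : ℝ) * E ^ (-((n * k : ℕ) : ℤ))⌋ = (A : ℤ) := by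
    rw [h1, hsplit, show ((A:ℕ):ℝ) = ((A:ℤ):ℝ) by push_cast; rfl,
      Int.floor_intCast_add, Int.floor_eq_zero_iff.mpr ⟨hT0, hT1⟩, add_zero]
  rw [hfloor]
  -- now the arithmetic: A % e^n = t n
  have hAeq : A = t n + e ^ n * ∑ k ∈ Finset.range n, t k * e ^ (n*n - n*k - n) := by
    rw [hA, Finset.sum_range_succ, Nat.sub_self, pow_zero, mul_one, Finset.mul_sum]
    rw [add_comm]
    congr 1
    refine Finset.sum_congr rfl fun k hk => ?_
    have hk' : k < n := Finset.mem_range.mp hk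
    have hkey : n ≤ n * n - n * k := by
      rw [← Nat.mul_sub]
      calc n = n * 1 := (mul_one n).symm
        _ ≤ n * (n - k) := Nat.mul_le_mul_left n (by omega)
    have h5 : e ^ (n*n - n*k) = e ^ n * e ^ (n*n - n*k - n) := by
      rw [← pow_add]; congr 1; omega
    rw [h5]
    ring
  have htn : (t n : ℤ) < (e : ℤ) ^ n := by
    have h5 : t n < e ^ n :=
      lt_of_lt_of_le (hbe n hn) (Nat.pow_le_pow_right (by omega) (by omega))
    exact_mod_cast h5
  have : (A : ℤ) = (t n : ℤ) + (e:ℤ)^n * (∑ k ∈ Finset.range n, t k * e ^ (n*n - n*k - n) : ℕ) := by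
    rw [hAeq]
    push_cast
    ring
  rw [this, Int.add_mul_emod_self_left, Int.emod_eq_of_lt (Int.natCast_nonneg _) htn]
end

section
/- Let A, B, C, a be integers such that A > 0, B > 0, C ≥ 2, C divides A, B does not divide A, B ≡ a (mod C), a ≠ 0, a < 0, and |a|·(⌊A/B⌋ mod C) < C. Then (A mod B) mod C = |a|·(⌊A/B⌋ mod C). -/
theorem stmt_7 (A B C a : ℤ) (hA : 0 < A) (hB : 0 < B) (hC : 2 ≤ C)
    (hCA : C ∣ A) (hBA : ¬ B ∣ A) (hBa : B ≡ a [ZMOD C]) (ha0 : a ≠ 0)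
    (haneg : a < 0) (hsmall : |a| * ((A / B) % C) < C) :
    (A % B) % C = |a| * ((A / B) % C) := by
  have habs : |a| = -a := abs_of_neg haneg
  have hq : A / B % C ≡ A / B [ZMOD C] := Int.emod_emod_of_dvd _ dvd_rfl
  have hA0 : A ≡ 0 [ZMOD C] := Int.modEq_zero_iff_dvd.mpr hCA
  have hmod : A % B ≡ |a| * (A / B % C) [ZMOD C] := by
    rw [Int.emod_def, habs]
    calc A - B * (A / B) ≡ 0 - a * (A / B % C) [ZMOD C] :=
          Int.ModEq.sub hA0 (hBa.mul hq.symm)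
      _ = -a * (A / B % C) := by ring
  have hR0 : 0 ≤ |a| * (A / B % C) :=
    mul_nonneg (abs_nonneg a) (Int.emod_nonneg _ (by omega))
  rw [show A % B % C = |a| * (A / B % C) % C from hmod,
    Int.emod_eq_of_lt hR0 hsmall]
end

section
/- Let A, B, C, a be integers such that A > 0, B > 0, C ≥ 2, C divides A, B does not divide A, B ≡ a (mod C), a ≠ 0, a > 0, and a + a·(⌊A/B⌋ mod C) < C. Then ((−A) mod B) mod C = a·(1 + (⌊A/B⌋ mod C)). -/
theorem stmt_8 (A B C a : ℤ) (hA : 0 < A) (hB : 0 < B) (hC : 2 ≤ C)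
    (hCA : C ∣ A) (hBA : ¬ B ∣ A) (hBa : B ≡ a [ZMOD C]) (ha0 : a ≠ 0)
    (hapos : 0 < a) (hsmall : a + a * ((A / B) % C) < C) :
    ((-A) % B) % C = a * (1 + (A / B) % C) := by
  have hC0 : (0:ℤ) < C := by linarith
  have hr0 : A % B ≠ 0 := fun h => hBA (Int.dvd_of_emod_eq_zero h)
  have hrpos : 0 < A % B := lt_of_le_of_ne (Int.emod_nonneg _ hB.ne') (Ne.symm hr0)
  have hrlt : A % B < B := Int.emod_lt_of_pos _ hB
  have hkey : -A = (B - A % B) + B * (-(A / B) - 1) := by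
    have := Int.emod_add_mul_ediv A B
    ring_nf
    linarith
  have hmod : (-A) % B = B - A % B := by
    rw [hkey, Int.add_mul_emod_self_left, Int.emod_eq_of_lt (by linarith) (by linarith)]
  -- congruences mod C
  have hA0 : A ≡ 0 [ZMOD C] := (Int.modEq_zero_iff_dvd).mpr hCA
  have hq : (A / B) ≡ (A / B) % C [ZMOD C] := (Int.emod_emod_of_dvd _ dvd_rfl).symm
  have hAB : A % B ≡ 0 - a * ((A / B) % C) [ZMOD C] := by
    have h1 : A % B = A - B * (A / B) := Int.emod_def A B
    rw [h1]
    exact hA0.sub (hBa.mul hq)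
  have hcong : (-A) % B ≡ a * (1 + (A / B) % C) [ZMOD C] := by
    rw [hmod]
    have := hBa.sub hAB
    calc B - A % B ≡ a - (0 - a * ((A / B) % C)) [ZMOD C] := this
      _ = a * (1 + (A / B) % C) := by ring
  have hRnn : 0 ≤ a * (1 + (A / B) % C) :=
    mul_nonneg hapos.le (by linarith [Int.emod_nonneg (A / B) hC0.ne'])
  have hRlt : a * (1 + (A / B) % C) < C := by nlinarith
  calc ((-A) % B) % C = (a * (1 + (A / B) % C)) % C := hcong
    _ = a * (1 + (A / B) % C) := Int.emod_eq_of_lt hRnn hRlt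
end

section
/- Let t : ℕ → ℕ, let Ã, B̃ ∈ ℤ[X] be polynomials with positive leading coefficients, let α be the constant coefficient of B̃ with α < 0, and let c ≥ 2 be an integer such that for every integer e ≥ c and every integer n ≥ 1 one has B̃(e^n) > 0, B̃(e^n) does not divide e^(n²)·Ã(e^n), e^(n²)·Ã(e^n) > 0, and t(n) = ⌊e^(n²)·Ã(e^n) / B̃(e^n)⌋ mod e^n. Then there exists a natural number e ≥ c such that for every integer n ≥ 1: |α| · t(n) = ((e^(n²)·Ã(e^n)) mod B̃(e^n)) mod e^n. -/
open Polynomial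

theorem stmt_9 (t : ℕ → ℕ) (A B : Polynomial ℤ)
    (hA : 0 < A.leadingCoeff) (hB : 0 < B.leadingCoeff)
    (α : ℤ) (hα : α = B.coeff 0) (hαneg : α < 0)
    (c : ℕ) (hc : 2 ≤ c)
    (hrep : ∀ e : ℕ, c ≤ e → ∀ n : ℕ, 1 ≤ n →
      0 < B.eval ((e : ℤ) ^ n) ∧
      ¬ (B.eval ((e : ℤ) ^ n) ∣ (e : ℤ) ^ (n ^ 2) * A.eval ((e : ℤ) ^ n)) ∧
      0 < (e : ℤ) ^ (n ^ 2) * A.eval ((e : ℤ) ^ n) ∧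
      (t n : ℤ) =
        ((e : ℤ) ^ (n ^ 2) * A.eval ((e : ℤ) ^ n) / B.eval ((e : ℤ) ^ n)) % (e : ℤ) ^ n) :
    ∃ e : ℕ, c ≤ e ∧ ∀ n : ℕ, 1 ≤ n →
      |α| * (t n : ℤ) =
        (((e : ℤ) ^ (n ^ 2) * A.eval ((e : ℤ) ^ n)) % B.eval ((e : ℤ) ^ n)) % (e : ℤ) ^ n := by
  set a : ℕ := α.toNat? |>.getD 0 with ha0
  -- use a := |α|.toNat
  refine ⟨c * |α|.toNat, ?_, ?_⟩
  · have h1 : 1 ≤ |α|.toNat := by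
      have : 1 ≤ |α| := by
        have := abs_pos.mpr (ne_of_lt hαneg)
        omega
      omega
    nlinarith
  · intro n hn
    set e : ℕ := c * |α|.toNat with he
    have hce : c ≤ e := by
      have h1 : 1 ≤ |α|.toNat := by
        have : 1 ≤ |α| := by
          have := abs_pos.mpr (ne_of_lt hαneg)
          omega
        omega
      calc c = c * 1 := (mul_one c).symm
        _ ≤ c * |α|.toNat := Nat.mul_le_mul_left c h1
    obtain ⟨hBpos, hndvd, hNpos, ht⟩ := hrep e hce n hn
    obtain ⟨hBpos', -, -, ht'⟩ := hrep c le_rfl n hn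
    set x : ℤ := (e : ℤ) ^ n with hx
    set N : ℤ := (e : ℤ) ^ (n ^ 2) * A.eval x with hN
    set Bx : ℤ := B.eval x with hBx
    set q : ℤ := N / Bx with hq
    set r : ℤ := N % Bx with hr
    have hxpos : 0 < x := by
      have : 0 < e := lt_of_lt_of_le (by omega) hce
      positivity
    -- bound on t n : t n < c ^ n
    have htlt : (t n : ℤ) < (c : ℤ) ^ n := by
      rw [ht']
      exact Int.emod_lt_of_pos _ (by positivity)
    -- |α| * t n < x
    have habs : |α| = -α := abs_of_neg hαneg
    have hale : |α| ≤ ((|α|.toNat : ℤ)) ^ n := by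
      have h1 : (1:ℤ) ≤ (|α|.toNat : ℤ) := by
        have : 1 ≤ |α| := by
          have := abs_pos.mpr (ne_of_lt hαneg)
          omega
        omega
      calc |α| = ((|α|.toNat : ℤ)) ^ 1 := by
            rw [pow_one, Int.toNat_of_nonneg (abs_nonneg α)]
        _ ≤ ((|α|.toNat : ℤ)) ^ n := pow_le_pow_right₀ h1 hn
    have hbound : |α| * (t n : ℤ) < x := by
      have htnn : (0:ℤ) ≤ (t n : ℤ) := Int.natCast_nonneg _
      have hxeq : x = (c:ℤ) ^ n * ((|α|.toNat : ℤ)) ^ n := by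
        rw [hx, he]
        push_cast
        ring
      have hcpow : (0:ℤ) < (c:ℤ) ^ n := by positivity
      calc |α| * (t n : ℤ) ≤ ((|α|.toNat : ℤ)) ^ n * (t n : ℤ) :=
            mul_le_mul_of_nonneg_right hale htnn
        _ < ((|α|.toNat : ℤ)) ^ n * (c:ℤ) ^ n := by
            have hapow : (0:ℤ) < ((|α|.toNat : ℤ)) ^ n := by
              have := abs_pos.mpr (ne_of_lt hαneg)
              have : (0:ℤ) < (|α|.toNat : ℤ) := by omega
              positivity
            exact mul_lt_mul_of_pos_left htlt hapow
        _ = x := by rw [hxeq]; ring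
    -- congruence
    have hdvdB : x ∣ Bx - α := by
      have := Polynomial.sub_dvd_eval_sub x 0 B
      simpa [hα, Polynomial.coeff_zero_eq_eval_zero] using this
    have hdvdN : x ∣ N := by
      have h1 : x ∣ (e : ℤ) ^ (n ^ 2) := by
        rw [hx]
        exact pow_dvd_pow _ (by nlinarith)
      exact Dvd.dvd.mul_right h1 _
    have hNeq : N = Bx * q + r := (Int.mul_ediv_add_emod N Bx).symm
    have hqt : q % x = (t n : ℤ) := ht.symm
    -- r ≡ |α| * t n  [x]
    have hcong : x ∣ r - |α| * (t n : ℤ) := by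
      have h1 : x ∣ q * (Bx - α) := Dvd.dvd.mul_left hdvdB q
      have h2 : x ∣ q - (t n : ℤ) := by
        rw [← hqt, Int.emod_def]
        have : q - (q - x * (q / x)) = x * (q / x) := by ring
        rw [this]
        exact dvd_mul_right x _
      have h3 : x ∣ α * (q - (t n : ℤ)) := Dvd.dvd.mul_left h2 α
      have heq : r - |α| * (t n : ℤ) = N - q * (Bx - α) - α * (q - (t n : ℤ)) := by
        rw [habs, hNeq]; ring
      rw [heq]
      exact dvd_sub (dvd_sub hdvdN h1) h3
    have hrnn : 0 ≤ r := Int.emod_nonneg N (ne_of_gt hBpos)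
    have habsnn : 0 ≤ |α| * (t n : ℤ) := mul_nonneg (abs_nonneg α) (Int.natCast_nonneg _)
    have hmod : r % x = (|α| * (t n : ℤ)) % x := by
      have : Int.ModEq x (|α| * (t n : ℤ)) r := (Int.modEq_iff_dvd.mpr hcong)
      exact this.symm
    rw [hmod, Int.emod_eq_of_lt habsnn hbound]
end

section
/- Let t : ℕ → ℕ, let Ã, B̃ ∈ ℤ[X] be polynomials with positive leading coefficients, let α be the constant coefficient of B̃ with α > 0, and let c ≥ 2 be an integer such that for every integer e ≥ c and every integer n ≥ 1 one has B̃(e^n) > 0, B̃(e^n) does not divide e^(n²)·Ã(e^n), e^(n²)·Ã(e^n) > 0, and t(n) = ⌊e^(n²)·Ã(e^n) / B̃(e^n)⌋ mod e^n. Then there exists a natural number e ≥ c such that for every integer n ≥ 1: α · (t(n) + 1) = ((−e^(n²)·Ã(e^n)) mod B̃(e^n)) mod e^n. -/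
open Polynomial

theorem stmt_10 (t : ℕ → ℕ) (A B : Polynomial ℤ)
    (hA : 0 < A.leadingCoeff) (hB : 0 < B.leadingCoeff)
    (α : ℤ) (hα : α = B.coeff 0) (hαpos : 0 < α)
    (c : ℕ) (hc : 2 ≤ c)
    (hrep : ∀ e : ℕ, c ≤ e → ∀ n : ℕ, 1 ≤ n →
      0 < B.eval ((e : ℤ) ^ n) ∧
      ¬ (B.eval ((e : ℤ) ^ n) ∣ (e : ℤ) ^ (n ^ 2) * A.eval ((e : ℤ) ^ n)) ∧
      0 < (e : ℤ) ^ (n ^ 2) * A.eval ((e : ℤ) ^ n) ∧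
      (t n : ℤ) =
        ((e : ℤ) ^ (n ^ 2) * A.eval ((e : ℤ) ^ n) / B.eval ((e : ℤ) ^ n)) % (e : ℤ) ^ n) :
    ∃ e : ℕ, c ≤ e ∧ ∀ n : ℕ, 1 ≤ n →
      α * ((t n : ℤ) + 1) =
        ((-((e : ℤ) ^ (n ^ 2) * A.eval ((e : ℤ) ^ n))) % B.eval ((e : ℤ) ^ n)) % (e : ℤ) ^ n := by
  refine ⟨(α.toNat + 1) * c, ?_, ?_⟩
  · exact Nat.le_mul_of_pos_left c (by omega)
  intro n hn
  set e : ℕ := (α.toNat + 1) * c with he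
  have hce : c ≤ e := Nat.le_mul_of_pos_left c (by omega)
  have heZ : (e : ℤ) = (α + 1) * c := by
    push_cast [he]
    rw [Int.toNat_of_nonneg hαpos.le]
  obtain ⟨hBpos, hnd, hNpos, ht⟩ := hrep e hce n hn
  -- bound on t n from e = c
  have htb : (t n : ℤ) < (c : ℤ) ^ n := by
    obtain ⟨_, _, _, htc⟩ := hrep c le_rfl n hn
    have hcp : (0:ℤ) < (c:ℤ) ^ n := by positivity
    rw [htc]; exact Int.emod_lt_of_pos _ hcp
  set X : ℤ := (e : ℤ) ^ n with hX
  have hXpos : (0:ℤ) < X := by positivity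
  set N : ℤ := (e : ℤ) ^ (n ^ 2) * A.eval ((e : ℤ) ^ n) with hN
  set Bv : ℤ := B.eval ((e : ℤ) ^ n) with hBv
  set q : ℤ := N / Bv with hq
  set r : ℤ := N % Bv with hr
  have hdm : N = Bv * q + r := (Int.mul_ediv_add_emod N Bv).symm
  have hr0 : 0 < r := by
    rcases (Int.emod_nonneg N hBpos.ne').lt_or_eq with h | h
    · exact h
    · exact absurd (Int.dvd_of_emod_eq_zero h.symm) hnd
  have hrB : r < Bv := Int.emod_lt_of_pos N hBpos
  -- (-N) % Bv = Bv - r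
  have hneg : (-N) % Bv = Bv - r := by
    have h1 : -N = (Bv - r) + Bv * (-q - 1) := by rw [hdm]; ring
    rw [h1, Int.add_mul_emod_self_left]
    exact Int.emod_eq_of_lt (by omega) (by omega)
  rw [hneg]
  -- congruences mod X
  have hXdvdN : X ∣ N := by
    have : (e:ℤ) ^ n ∣ (e:ℤ) ^ (n ^ 2) := pow_dvd_pow _ (by nlinarith)
    exact dvd_mul_of_dvd_left this _
  have hBcong : Bv ≡ α [ZMOD X] := by
    refine Int.ModEq.symm (Int.modEq_iff_dvd.mpr ?_)
    show X ∣ Bv - α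
    · 
      have := Polynomial.sub_dvd_eval_sub ((e:ℤ)^n) 0 B
      simp only [sub_zero] at this
      rw [hα, Polynomial.coeff_zero_eq_eval_zero]
      exact this
  have hqcong : q ≡ (t n : ℤ) [ZMOD X] := by
    rw [ht]
    exact (Int.emod_emod_of_dvd q dvd_rfl).symm
  have hNcong : N ≡ 0 [ZMOD X] := (Int.modEq_zero_iff_dvd).mpr hXdvdN
  have hcong : (Bv - r) ≡ α * ((t n : ℤ) + 1) [ZMOD X] := by
    have h1 : Bv - r = Bv * (1 + q) - N := by rw [hdm]; ring
    have h2 : Bv * (1 + q) ≡ α * (1 + (t n : ℤ)) [ZMOD X] :=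
      hBcong.mul (hqcong.add_left 1)
    calc (Bv - r) = Bv * (1 + q) - N := h1
      _ ≡ α * (1 + (t n : ℤ)) - 0 [ZMOD X] := h2.sub hNcong
      _ = α * ((t n : ℤ) + 1) := by ring
  -- size bound
  have hbound : α * ((t n : ℤ) + 1) < X := by
    have hcn : (0:ℤ) < (c:ℤ) ^ n := by positivity
    have h1 : α * ((t n : ℤ) + 1) ≤ α * (c:ℤ) ^ n := by
      have : (t n : ℤ) + 1 ≤ (c:ℤ)^n := htb
      nlinarith
    have h2 : (α + 1) * (c:ℤ)^n ≤ X := by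
      rw [hX, heZ, mul_pow]
      have hsp : (α + 1) ≤ (α + 1) ^ n := le_self_pow₀ (by omega) (by omega)
      nlinarith
    nlinarith
  have hnn : 0 ≤ α * ((t n : ℤ) + 1) := by positivity
  rw [Int.ModEq] at hcong
  rw [hcong, Int.emod_eq_of_lt hnn hbound]
end

section
/- Let t : ℕ → ℕ, let Ã, B̃ ∈ ℤ[X] be polynomials with positive leading coefficients, let α be the constant coefficient of B̃ with α ≠ 0, and let c ≥ 2 be an integer such that for every integer e ≥ c and every integer n ≥ 1 one has B̃(e^n) > 0, B̃(e^n) does not divide e^(n²)·Ã(e^n), e^(n²)·Ã(e^n) > 0, and t(n) = ⌊e^(n²)·Ã(e^n) / B̃(e^n)⌋ mod e^n. Then there exists a natural number e ≥ c such that for every integer n ≥ 1: t(n) = (−1 − sgn(α))/2 + (1/|α|)·(((−sgn(α)·e^(n²)·Ã(e^n)) mod B̃(e^n)) mod e^n), equivalently |α|·(t(n) + (1 + sgn(α))/2) = ((−sgn(α)·e^(n²)·Ã(e^n)) mod B̃(e^n)) mod e^n. -/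
open Polynomial

theorem stmt_11 (t : ℕ → ℕ) (A B : Polynomial ℤ)
    (hA : 0 < A.leadingCoeff) (hB : 0 < B.leadingCoeff)
    (α : ℤ) (hα : α = B.coeff 0) (hαne : α ≠ 0)
    (c : ℕ) (hc : 2 ≤ c)
    (hrep : ∀ e : ℕ, c ≤ e → ∀ n : ℕ, 1 ≤ n →
      0 < B.eval ((e : ℤ) ^ n) ∧
      ¬ (B.eval ((e : ℤ) ^ n) ∣ (e : ℤ) ^ (n ^ 2) * A.eval ((e : ℤ) ^ n)) ∧
      0 < (e : ℤ) ^ (n ^ 2) * A.eval ((e : ℤ) ^ n) ∧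
      (t n : ℤ) =
        ((e : ℤ) ^ (n ^ 2) * A.eval ((e : ℤ) ^ n) / B.eval ((e : ℤ) ^ n)) % (e : ℤ) ^ n) :
    ∃ e : ℕ, c ≤ e ∧ ∀ n : ℕ, 1 ≤ n →
      |α| * ((t n : ℤ) + (1 + Int.sign α) / 2) =
        ((-(Int.sign α) * ((e : ℤ) ^ (n ^ 2) * A.eval ((e : ℤ) ^ n))) % B.eval ((e : ℤ) ^ n)) % (e : ℤ) ^ n := by
  set e : ℕ := (α.natAbs + 1) * c with he_def
  have he : c ≤ e := Nat.le_mul_of_pos_left c (Nat.succ_pos _)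
  refine ⟨e, he, ?_⟩
  intro n hn
  obtain ⟨hBpos, hndvd, hNpos, ht⟩ := hrep e he n hn
  obtain ⟨-, -, -, htc⟩ := hrep c le_rfl n hn
  have hcpos : (0:ℤ) < (c:ℤ) ^ n := pow_pos (by exact_mod_cast (by omega : 0 < c)) n
  have htb : (t n : ℤ) < (c:ℤ) ^ n := by
    rw [htc]; exact Int.emod_lt_of_pos _ hcpos
  set x : ℤ := (e : ℤ) ^ n with hx_def
  set N : ℤ := (e : ℤ) ^ (n ^ 2) * A.eval x with hN_def
  set Bv : ℤ := B.eval x with hBv_def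
  set q : ℤ := N / Bv with hq_def
  set r : ℤ := N % Bv with hr_def
  have hq : Bv * q + r = N := Int.mul_ediv_add_emod N Bv
  have hrpos : 0 < r :=
    lt_of_le_of_ne (Int.emod_nonneg N (ne_of_gt hBpos))
      (fun h => hndvd (Int.dvd_of_emod_eq_zero h.symm))
  have hrlt : r < Bv := Int.emod_lt_of_pos N hBpos
  have hdvdN : x ∣ N :=
    dvd_mul_of_dvd_left (pow_dvd_pow _ (Nat.le_self_pow (by norm_num) n)) _
  have hDα : x ∣ Bv - α := by
    rw [hα, coeff_zero_eq_eval_zero]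
    simpa using sub_dvd_eval_sub x 0 B
  obtain ⟨m, hm⟩ := hdvdN
  obtain ⟨d, hd⟩ := hDα
  have hkey : α * q + r = x * (m - d * q) := by linear_combination hq + hm - q * hd
  have hqt : q - (t n : ℤ) = x * (q / x) := by rw [ht, Int.emod_def]; ring
  have habs1 : (1:ℤ) ≤ |α| := Int.one_le_abs (by simpa using hαne)
  have hcast : (e:ℤ) = (|α|+1) * (c:ℤ) := by
    rw [Int.abs_eq_natAbs, he_def]; push_cast; ring
  have hbig : |α| * (c:ℤ)^n < x := by
    have h1 : (|α|+1) ≤ (|α|+1)^n := le_self_pow₀ (by linarith) (by omega)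
    calc |α| * (c:ℤ)^n < (|α|+1) * (c:ℤ)^n := by
            exact mul_lt_mul_of_pos_right (by linarith) hcpos
      _ ≤ (|α|+1)^n * (c:ℤ)^n := mul_le_mul_of_nonneg_right h1 (le_of_lt hcpos)
      _ = x := by rw [hx_def, hcast, mul_pow]
  have htn0 : (0:ℤ) ≤ (t n : ℤ) := Int.natCast_nonneg _
  rcases lt_or_gt_of_ne hαne with hneg | hpos
  · -- α < 0
    have hs : Int.sign α = -1 := Int.sign_eq_neg_one_of_neg hneg
    rw [hs, abs_of_neg hneg]
    norm_num
    have hd2 : r - (-α * (t n : ℤ)) = x * ((m - d*q) - α * (q / x)) := by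
      linear_combination hkey - α * hqt
    have hnn : (0:ℤ) ≤ -α * (t n : ℤ) := mul_nonneg (by linarith) htn0
    have hlt : -α * (t n : ℤ) < x :=
      calc -α * (t n : ℤ) < -α * (c:ℤ)^n := mul_lt_mul_of_pos_left htb (by linarith)
        _ = |α| * (c:ℤ)^n := by rw [abs_of_neg hneg]
        _ < x := hbig
    symm
    calc r % x = (-α * (t n : ℤ)) % x :=
          Int.emod_eq_emod_iff_emod_sub_eq_zero.mpr
            (Int.emod_eq_zero_of_dvd ⟨_, hd2⟩)
      _ = -α * (t n : ℤ) := Int.emod_eq_of_lt hnn hlt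
      _ = -(α * (t n : ℤ)) := by ring
  · -- α > 0
    have hs : Int.sign α = 1 := Int.sign_eq_one_of_pos hpos
    rw [hs, abs_of_pos hpos]
    norm_num
    have h1 : (-N) % Bv = Bv - r := by
      have hcong : (-N) % Bv = (Bv - r) % Bv :=
        Int.emod_eq_emod_iff_emod_sub_eq_zero.mpr
          (Int.emod_eq_zero_of_dvd ⟨-(q+1), by linear_combination hq⟩)
      rw [hcong, Int.emod_eq_of_lt (by linarith) (by linarith)]
    rw [h1]
    have hd3 : (Bv - r) - α * ((t n : ℤ) + 1) = x * (d - (m - d*q) + α * (q / x)) := by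
      linear_combination hd - hkey + α * hqt
    have hnn : (0:ℤ) ≤ α * ((t n : ℤ) + 1) := mul_nonneg hpos.le (by linarith)
    have hlt : α * ((t n : ℤ) + 1) < x :=
      calc α * ((t n : ℤ) + 1) ≤ α * (c:ℤ)^n :=
            mul_le_mul_of_nonneg_left (by linarith) hpos.le
        _ = |α| * (c:ℤ)^n := by rw [abs_of_pos hpos]
        _ < x := hbig
    symm
    calc (Bv - r) % x = (α * ((t n : ℤ) + 1)) % x :=
          Int.emod_eq_emod_iff_emod_sub_eq_zero.mpr
            (Int.emod_eq_zero_of_dvd ⟨_, hd3⟩)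
      _ = α * ((t n : ℤ) + 1) := Int.emod_eq_of_lt hnn hlt
end

section
/- For every integer n ≥ 1, the n-th Fibonacci number satisfies F(n) = (3^(n²+n) mod (3^(2n) − 3^n − 1)) mod 3^n. -/
lemma fib_pow_modeq (m : ℤ) : ∀ k : ℕ,
    m ^ (k + 1) ≡ (Nat.fib (k + 1) : ℤ) * m + (Nat.fib k : ℤ) [ZMOD (m ^ 2 - m - 1)] := by
  intro k
  induction k with
  | zero => simp
  | succ k ih =>
    have hm2 : (m : ℤ) ^ 2 ≡ m + 1 [ZMOD (m ^ 2 - m - 1)] := by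
      have : (m ^ 2 - m - 1) ∣ (m + 1) - m ^ 2 := ⟨-1, by ring⟩
      exact (Int.modEq_iff_dvd.mpr this)
    calc m ^ (k + 2) = m * m ^ (k + 1) := by ring
      _ ≡ m * ((Nat.fib (k + 1) : ℤ) * m + (Nat.fib k : ℤ)) [ZMOD (m ^ 2 - m - 1)] :=
          ih.mul_left m
      _ = (Nat.fib (k + 1) : ℤ) * m ^ 2 + (Nat.fib k : ℤ) * m := by ring
      _ ≡ (Nat.fib (k + 1) : ℤ) * (m + 1) + (Nat.fib k : ℤ) * m [ZMOD (m ^ 2 - m - 1)] :=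
          ((hm2.mul_left _).add_right _)
      _ = (Nat.fib (k + 2) : ℤ) * m + (Nat.fib (k + 1) : ℤ) := by
          push_cast [Nat.fib_add_two]; ring

lemma fib_bound : ∀ n : ℕ, 1 ≤ n → Nat.fib n + 2 ≤ 3 ^ n ∧ Nat.fib (n + 1) + 2 ≤ 3 ^ n := by
  intro n hn
  induction n, hn using Nat.le_induction with
  | base => simp
  | succ n hn ih =>
    obtain ⟨h1, h2⟩ := ih
    constructor
    · calc Nat.fib (n + 1) + 2 ≤ 3 ^ n := h2
        _ ≤ 3 ^ (n + 1) := Nat.pow_le_pow_right (by norm_num) (Nat.le_succ n)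
    · rw [Nat.fib_add_two]
      calc Nat.fib n + Nat.fib (n + 1) + 2 ≤ (Nat.fib n + 2) + (Nat.fib (n + 1) + 2) := by omega
        _ ≤ 3 ^ n + 3 ^ n := Nat.add_le_add h1 h2
        _ ≤ 3 ^ (n + 1) := by rw [pow_succ]; omega

theorem stmt_13 (n : ℕ) (hn : 1 ≤ n) :
    (Nat.fib n : ℤ) =
      ((3 : ℤ) ^ (n ^ 2 + n) % ((3 : ℤ) ^ (2 * n) - 3 ^ n - 1)) % (3 : ℤ) ^ n := by
  set m : ℤ := (3 : ℤ) ^ n with hm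
  have hM : (3 : ℤ) ^ (2 * n) - 3 ^ n - 1 = m ^ 2 - m - 1 := by
    rw [hm, ← pow_mul]; ring_nf
  have hpow : (3 : ℤ) ^ (n ^ 2 + n) = m ^ (n + 1) := by
    rw [hm, ← pow_mul]; ring_nf
  obtain ⟨hb1, hb2⟩ := fib_bound n hn
  -- bounds as integers
  have hmb : (Nat.fib n : ℤ) + 2 ≤ m ∧ (Nat.fib (n + 1) : ℤ) + 2 ≤ m := by
    rw [hm]
    constructor <;> [exact_mod_cast hb1; exact_mod_cast hb2]
  have hfib1 : (0:ℤ) ≤ (Nat.fib (n+1) : ℤ) * m + (Nat.fib n : ℤ) := by positivity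
  have hmpos : (0:ℤ) < m := by positivity
  have hfib2 : (Nat.fib (n+1) : ℤ) * m + (Nat.fib n : ℤ) < m ^ 2 - m - 1 := by
    nlinarith [hmb.1, hmb.2, hmpos]
  have hmod := fib_pow_modeq m n
  have h1 : m ^ (n + 1) % (m ^ 2 - m - 1) = (Nat.fib (n+1) : ℤ) * m + (Nat.fib n : ℤ) := by
    calc m ^ (n + 1) % (m ^ 2 - m - 1)
        = ((Nat.fib (n+1) : ℤ) * m + (Nat.fib n : ℤ)) % (m ^ 2 - m - 1) := hmod
      _ = (Nat.fib (n+1) : ℤ) * m + (Nat.fib n : ℤ) := Int.emod_eq_of_lt hfib1 hfib2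
  rw [hM, hpow, h1]
  rw [add_comm, mul_comm, Int.add_mul_emod_self_left]
  rw [Int.emod_eq_of_lt (by positivity) (by linarith [hmb.1])]
end

section
/- For every integer n ≥ 1, the n-th Lucas number satisfies L(n) = ((2·5^(n²+2n) − 5^(n²+n)) mod (5^(2n) − 5^n − 1)) mod 5^n. -/
/-- The Lucas numbers: `L(0) = 2`, `L(1) = 1`, `L(n+2) = L(n+1) + L(n)`. -/
def lucas : ℕ → ℤ
  | 0 => 2
  | 1 => 1
  | n + 2 => lucas (n + 1) + lucas n

lemma lucas_pos : ∀ n, 1 ≤ lucas n := by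
  have key : ∀ n, 1 ≤ lucas n ∧ 1 ≤ lucas (n + 1) := by
    intro n
    induction n with
    | zero => simp [lucas]
    | succ k ih =>
      refine ⟨ih.2, ?_⟩
      show 1 ≤ lucas (k + 2)
      rw [lucas]
      linarith [ih.1, ih.2]
  exact fun n => (key n).1

lemma lucas_le : ∀ n, lucas (n + 1) ≤ 5 ^ n ∧ lucas (n + 2) ≤ 5 ^ (n + 1) - 2 := by
  intro n
  induction n with
  | zero => norm_num [lucas]
  | succ k ih =>
    have h5 : (1 : ℤ) ≤ 5 ^ k := one_le_pow₀ (by norm_num)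
    constructor
    · linarith [ih.2]
    · show lucas (k + 3) ≤ 5 ^ (k + 2) - 2
      have h3 : lucas (k + 3) = lucas (k + 2) + lucas (k + 1) := by rw [lucas]
      rw [h3]
      have : (5:ℤ) ^ (k+2) = 25 * 5 ^ k := by ring
      have h1 : (5:ℤ) ^ (k+1) = 5 * 5 ^ k := by ring
      nlinarith [ih.1, ih.2]

lemma lucas_dvd (x : ℤ) : ∀ n, (x ^ 2 - x - 1) ∣
    (2 * x ^ (n + 2) - x ^ (n + 1) - (lucas (n + 1) * x + lucas n)) := by
  have key : ∀ n, (x ^ 2 - x - 1) ∣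
      (2 * x ^ (n + 2) - x ^ (n + 1) - (lucas (n + 1) * x + lucas n)) ∧
      (x ^ 2 - x - 1) ∣
      (2 * x ^ (n + 3) - x ^ (n + 2) - (lucas (n + 2) * x + lucas (n + 1))) := by
    intro n
    induction n with
    | zero =>
      constructor
      · exact ⟨2, by norm_num [lucas]; ring⟩
      · exact ⟨2 * x + 1, by norm_num [lucas]; ring⟩
    | succ k ih =>
      refine ⟨ih.2, ?_⟩
      obtain ⟨q1, h1⟩ := ih.1
      obtain ⟨q2, h2⟩ := ih.2
      refine ⟨q1 + q2 + 2 * x ^ (k + 2) - x ^ (k + 1), ?_⟩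
      have hL3 : lucas (k + 3) = lucas (k + 2) + lucas (k + 1) := by rw [lucas]
      have hL2 : lucas (k + 2) = lucas (k + 1) + lucas k := by rw [lucas]
      linear_combination h1 + h2 - x * hL3 - hL2
  exact fun n => (key n).1

theorem stmt_14 (n : ℕ) (hn : 1 ≤ n) :
    lucas n =
      ((2 * (5 : ℤ) ^ (n ^ 2 + 2 * n) - 5 ^ (n ^ 2 + n)) % ((5 : ℤ) ^ (2 * n) - 5 ^ n - 1))
        % (5 : ℤ) ^ n := by
  obtain ⟨m, rfl⟩ : ∃ m, n = m + 1 := ⟨n - 1, (Nat.succ_pred_eq_of_pos hn).symm⟩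
  set n := m + 1 with hn'
  set b : ℤ := 5 ^ n with hb
  have hb5 : (5 : ℤ) ≤ b := by
    have : (5 : ℤ) ^ 1 ≤ 5 ^ n := pow_le_pow_right₀ (by norm_num) (by omega)
    simpa using this
  have hbpos : 0 < b := by linarith
  -- rewrite exponents
  have e1 : (5 : ℤ) ^ (n ^ 2 + 2 * n) = b ^ (n + 2) := by rw [hb, ← pow_mul]; ring_nf
  have e2 : (5 : ℤ) ^ (n ^ 2 + n) = b ^ (n + 1) := by rw [hb, ← pow_mul]; ring_nf
  have e3 : (5 : ℤ) ^ (2 * n) = b ^ 2 := by rw [hb, ← pow_mul]; ring_nf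
  rw [e1, e2, e3]
  set M : ℤ := b ^ 2 - b - 1 with hM
  set r : ℤ := lucas (n + 1) * b + lucas n with hr
  -- bounds
  have hLpos := lucas_pos n
  have hLpos1 := lucas_pos (n + 1)
  have hLn : lucas n ≤ 5 ^ m := (lucas_le m).1
  have hLn1 : lucas (n + 1) ≤ b - 2 := (lucas_le m).2
  have hbm : (5 : ℤ) ^ m ≤ b := by
    rw [hb]; exact pow_le_pow_right₀ (by norm_num) (by omega)
  have hrpos : 0 ≤ r := by
    have : 0 ≤ lucas (n + 1) * b := mul_nonneg (by linarith) (le_of_lt hbpos)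
    rw [hr]; linarith
  have hb' : b = 5 * 5 ^ m := by rw [hb, hn']; ring
  have h5m : (1 : ℤ) ≤ 5 ^ m := one_le_pow₀ (by norm_num)
  have hrlt : r < M := by
    rw [hr, hM]
    nlinarith [hLn1, hLn, hbpos, mul_le_mul_of_nonneg_right hLn1 (le_of_lt hbpos)]
  -- divisibility
  obtain ⟨q, hq⟩ := lucas_dvd b n
  have hkey : 2 * b ^ (n + 2) - b ^ (n + 1) = r + M * q := by
    rw [hr, hM]; linarith [hq]
  rw [hkey]
  rw [Int.add_mul_emod_self_left, Int.emod_eq_of_lt hrpos hrlt]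
  rw [hr]
  have : lucas (n + 1) * b + lucas n = lucas n + b * lucas (n + 1) := by ring
  rw [this, Int.add_mul_emod_self_left, Int.emod_eq_of_lt (by linarith) (by linarith [hb', h5m])]
end

section
/- For every integer n ≥ 1, one has (1/2)·(((−6^(n²+n)) mod (6^(2n) − 3·6^n + 2)) mod 6^n) − 1 = 2^n − 1; equivalently, ((−6^(n²+n)) mod (6^(2n) − 3·6^n + 2)) mod 6^n = 2^(n+1), where the computation is carried out in the integers. -/
lemma aux17 (n : ℕ) (hn : 1 ≤ n) : (2:ℤ)^(n+1) + 2 ≤ 6^n := by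
  induction n with
  | zero => omega
  | succ k ih =>
    rcases Nat.eq_or_lt_of_le hn with h | h
    · have hk0 : k = 0 := by omega
      subst hk0; norm_num
    · have hk : 1 ≤ k := by omega
      have := ih hk
      have h6 : (2:ℤ) * 6^k ≤ 6^(k+1) := by
        have : (0:ℤ) ≤ 6^k := by positivity
        rw [pow_succ]; nlinarith
      calc (2:ℤ)^(k+1+1) + 2 = 2*((2:ℤ)^(k+1) + 2) - 2 := by ring
        _ ≤ 2 * 6^k - 2 := by nlinarith
        _ ≤ 6^(k+1) := by nlinarith

theorem stmt_17 (n : ℕ) (hn : 1 ≤ n) :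
    ((-(6 : ℤ) ^ (n ^ 2 + n)) % ((6 : ℤ) ^ (2 * n) - 3 * 6 ^ n + 2)) % (6 : ℤ) ^ n
      = 2 ^ (n + 1) := by
  set x : ℤ := (6:ℤ)^n with hxdef
  set t : ℤ := (2:ℤ)^(n+1) with htdef
  have ht2 : t + 2 ≤ x := aux17 n hn
  have ht0 : (2:ℤ) ≤ t := by
    have : (2:ℤ)^1 ≤ 2^(n+1) := pow_le_pow_right₀ (by norm_num) (by omega)
    simpa using this
  set r : ℤ := x^2 - 2*x - t*(x-1) with hrdef
  have hpow : -(6:ℤ)^(n^2+n) = -(x^(n+1)) := by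
    rw [hxdef, ← pow_mul]
    congr 2
    ring
  have hm : (6:ℤ)^(2*n) - 3*6^n + 2 = x^2 - 3*x + 2 := by
    rw [hxdef, ← pow_mul]
    ring_nf
  have hco : IsCoprime (x-1) (x-2) := ⟨1, -1, by ring⟩
  have d1 : (x-1) ∣ x^(n+1) + r := by
    have h1 : (x-1) ∣ x^(n+1) - 1^(n+1) := sub_dvd_pow_sub_pow x 1 (n+1)
    have h2 : (x-1) ∣ (x-1)*((x-1) - t) := Dvd.intro _ rfl
    have : x^(n+1) + r = (x^(n+1) - 1^(n+1)) + (x-1)*((x-1) - t) := by ring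
    rw [this]; exact dvd_add h1 h2
  have d2 : (x-2) ∣ x^(n+1) + r := by
    have h1 : (x-2) ∣ x^(n+1) - 2^(n+1) := sub_dvd_pow_sub_pow x 2 (n+1)
    have h2 : (x-2) ∣ (x - t)*(x-2) := Dvd.intro_left _ rfl
    have : x^(n+1) + r = (x^(n+1) - 2^(n+1)) + (x - t)*(x-2) := by ring
    rw [this]; exact dvd_add h1 h2
  have dm : (x^2 - 3*x + 2) ∣ x^(n+1) + r := by
    have := hco.mul_dvd d1 d2
    have heq : (x-1)*(x-2) = x^2 - 3*x + 2 := by ring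
    rwa [heq] at this
  obtain ⟨q, hq⟩ := dm
  have hr0 : 0 ≤ r := by nlinarith
  have hrm : r < x^2 - 3*x + 2 := by nlinarith
  have step1 : (-(x^(n+1))) % (x^2 - 3*x + 2) = r := by
    have : -(x^(n+1)) = r + (x^2 - 3*x + 2) * (-q) := by
      have : x^(n+1) + r = (x^2 - 3*x + 2) * q := hq
      linarith [this]
    rw [this, Int.add_mul_emod_self_left, Int.emod_eq_of_lt hr0 hrm]
  rw [hpow, hm, step1]
  have hrx : r = t + x * (x - 2 - t) := by ring
  rw [hrx, Int.add_mul_emod_self_left]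
  exact Int.emod_eq_of_lt (by positivity) (by linarith)
end

section
/- For every integer n ≥ 1, one has (1/2)·(((−2·9^(n²+2n) + 3·9^(n²+n)) mod (9^(2n) − 3·9^n + 2)) mod 9^n) − 1 = 2^n + 1; equivalently, ((−2·9^(n²+2n) + 3·9^(n²+n)) mod (9^(2n) − 3·9^n + 2)) mod 9^n = 2^(n+1) + 4, where the computation is carried out in the integers. -/
lemma aux_lt (n : ℕ) (hn : 1 ≤ n) : 2 ^ (n + 1) + 4 < 9 ^ n := by
  induction n with
  | zero => omega
  | succ m ih =>
    rcases Nat.eq_or_lt_of_le hn with h | h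
    · simp [← h]
    · have hm : 1 ≤ m := by omega
      have := ih hm
      have h9 : 9 ^ m ≥ 1 := Nat.one_le_pow _ _ (by norm_num)
      calc 2 ^ (m + 2) + 4 = 2 * (2 ^ (m+1) + 4) - 4 := by ring_nf; omega
        _ < 2 * 9 ^ m := by omega
        _ ≤ 9 ^ (m + 1) := by rw [pow_succ]; omega

theorem stmt_18 (n : ℕ) (hn : 1 ≤ n) :
    ((-2 * (9 : ℤ) ^ (n ^ 2 + 2 * n) + 3 * 9 ^ (n ^ 2 + n)) %
        ((9 : ℤ) ^ (2 * n) - 3 * 9 ^ n + 2)) % (9 : ℤ) ^ n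
      = 2 ^ (n + 1) + 4 := by
  set x : ℤ := (9 : ℤ) ^ n with hxdef
  have e1 : (9 : ℤ) ^ (n ^ 2 + 2 * n) = x ^ (n + 2) := by
    rw [hxdef, ← pow_mul]; ring_nf
  have e2 : (9 : ℤ) ^ (n ^ 2 + n) = x ^ (n + 1) := by
    rw [hxdef, ← pow_mul]; ring_nf
  have e3 : (9 : ℤ) ^ (2 * n) = x ^ 2 := by
    rw [hxdef, ← pow_mul]; ring_nf
  rw [e1, e2, e3]
  set c : ℤ := 2 ^ (n + 1) + 4 with hcdef
  have hcx : c < x := by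
    have := aux_lt n hn
    have : ((2 ^ (n + 1) + 4 : ℕ) : ℤ) < ((9 ^ n : ℕ) : ℤ) := by exact_mod_cast this
    push_cast at this
    simpa [hcdef, hxdef] using this
  have hc0 : (8 : ℤ) ≤ c := by
    have : (2:ℤ)^2 ≤ 2 ^ (n+1) := pow_le_pow_right₀ (by norm_num) (by omega)
    rw [hcdef]; norm_num at this; linarith
  have hx9 : (9 : ℤ) ≤ x := by
    calc (9:ℤ) = 9 ^ 1 := by norm_num
      _ ≤ 9 ^ n := pow_le_pow_right₀ (by norm_num) hn
  set A : ℤ := -2 * x ^ (n + 2) + 3 * x ^ (n + 1) with hAdef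
  set M : ℤ := x ^ 2 - 3 * x + 2 with hMdef
  set R : ℤ := x * (x - c) + c with hRdef
  -- divisibility: M ∣ A - R
  have d1 : (x - 1) ∣ A - R := by
    have h1 : (x - 1) ∣ x ^ (n + 2) - 1 := by
      simpa using sub_dvd_pow_sub_pow x 1 (n + 2)
    have h2 : (x - 1) ∣ x ^ (n + 1) - 1 := by
      simpa using sub_dvd_pow_sub_pow x 1 (n + 1)
    have key : A - R = -2 * (x ^ (n+2) - 1) + 3 * (x ^ (n+1) - 1)
        - (x^2 - 1) + c * (x - 1) := by
      rw [hAdef, hRdef]; ring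
    rw [key]
    have h3 : (x - 1) ∣ x ^ 2 - 1 := by
      simpa using sub_dvd_pow_sub_pow x 1 2
    exact dvd_add (dvd_sub (dvd_add (Dvd.dvd.mul_left h1 _) (Dvd.dvd.mul_left h2 _)) h3)
      (Dvd.dvd.mul_left dvd_rfl _)
  have d2 : (x - 2) ∣ A - R := by
    have h1 : (x - 2) ∣ x ^ (n + 2) - 2 ^ (n + 2) := sub_dvd_pow_sub_pow x 2 (n + 2)
    have h2 : (x - 2) ∣ x ^ (n + 1) - 2 ^ (n + 1) := sub_dvd_pow_sub_pow x 2 (n + 1)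
    have h3 : (x - 2) ∣ x ^ 2 - 2 ^ 2 := sub_dvd_pow_sub_pow x 2 2
    have key : A - R = -2 * (x ^ (n+2) - 2^(n+2)) + 3 * (x ^ (n+1) - 2^(n+1))
        - (x^2 - 2^2) + c * (x - 2) := by
      rw [hAdef, hRdef, hcdef]; ring
    rw [key]
    exact dvd_add (dvd_sub (dvd_add (Dvd.dvd.mul_left h1 _) (Dvd.dvd.mul_left h2 _)) h3)
      (Dvd.dvd.mul_left dvd_rfl _)
  have hcop : IsCoprime (x - 1) (x - 2) := ⟨1, -1, by ring⟩
  have hdvd : M ∣ A - R := by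
    have : (x - 1) * (x - 2) ∣ A - R := hcop.mul_dvd d1 d2
    have hM : M = (x - 1) * (x - 2) := by rw [hMdef]; ring
    rwa [hM]
  -- A % M = R
  have hR0 : 0 ≤ R := by
    have : 0 ≤ x * (x - c) := mul_nonneg (by linarith) (by linarith)
    rw [hRdef]; linarith
  have hRM : R < M := by
    have : M - R = (c - 3) * x - c + 2 := by rw [hMdef, hRdef]; ring
    nlinarith [this]
  have hAmod : A % M = R := by
    have h1 : A ≡ R [ZMOD M] := (Int.modEq_iff_dvd.mpr hdvd).symm
    have h1' : A % M = R % M := h1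
    rw [h1', Int.emod_eq_of_lt hR0 hRM]
  rw [hAmod]
  have : R % x = c % x := by
    rw [hRdef, add_comm]; exact Int.add_mul_emod_self_left (a := c) (b := x) (c := x - c)
  rw [this, Int.emod_eq_of_lt (by linarith) hcx]
end

section
/- For every integer n ≥ 1, the n-th Tribonacci number satisfies T(n) = (2^(n²+n) mod (2^(3n) − 2^(2n) − 2^n − 1)) mod 2^n. -/
/-- The Tribonacci numbers: `T(0) = 0`, `T(1) = 0`, `T(2) = 1`,
`T(n+3) = T(n+2) + T(n+1) + T(n)`. -/
def tribonacci : ℕ → ℤ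
  | 0 => 0
  | 1 => 0
  | 2 => 1
  | n + 3 => tribonacci (n + 2) + tribonacci (n + 1) + tribonacci n

lemma trib_aux (n : ℕ) : 0 ≤ tribonacci n ∧ 0 ≤ tribonacci (n+1) ∧ 0 ≤ tribonacci (n+2) := by
  induction n with
  | zero => norm_num [tribonacci]
  | succ k ih =>
    obtain ⟨h0, h1, h2⟩ := ih
    refine ⟨h1, h2, ?_⟩
    show 0 ≤ tribonacci (k+2) + tribonacci (k+1) + tribonacci k
    linarith

lemma trib_nonneg (n : ℕ) : 0 ≤ tribonacci n := (trib_aux n).1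

lemma trib_le_aux (n : ℕ) : tribonacci (n+2) ≤ 2^n ∧ tribonacci (n+3) ≤ 2^(n+1) ∧
    tribonacci (n+4) ≤ 2^(n+2) := by
  induction n with
  | zero => norm_num [tribonacci]
  | succ k ih =>
    obtain ⟨h0, h1, h2⟩ := ih
    refine ⟨h1, h2, ?_⟩
    show tribonacci (k+4) + tribonacci (k+3) + tribonacci (k+2) ≤ 2^(k+3)
    have h4 : (2:ℤ)^(k+3) = 2^(k+2) + 2^(k+1) + 2^k + 2^k := by ring
    have h5 : (0:ℤ) ≤ 2^k := by positivity
    linarith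

lemma trib_le (n : ℕ) : tribonacci (n+2) ≤ 2^n := (trib_le_aux n).1

lemma trib_lt (n : ℕ) : tribonacci n < 2^n := by
  match n with
  | 0 => norm_num [tribonacci]
  | 1 => norm_num [tribonacci]
  | k+2 =>
    have h := trib_le k
    have : (2:ℤ)^k < 2^(k+2) := by
      have hp : (0:ℤ) < 2^k := by positivity
      calc (2:ℤ)^k < 2^k * 4 := by linarith
      _ = 2^(k+2) := by ring
    linarith

lemma trib_mono (n : ℕ) : tribonacci n ≤ tribonacci (n+1) := by
  match n with
  | 0 => norm_num [tribonacci]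
  | 1 => norm_num [tribonacci]
  | k+2 =>
    have h0 := trib_nonneg k
    have h1 := trib_nonneg (k+1)
    have : tribonacci (k+3) = tribonacci (k+2) + tribonacci (k+1) + tribonacci k := rfl
    linarith

lemma key (m : ℤ) : ∀ k, (m^3 - m^2 - m - 1) ∣
    m^(k+1) - (tribonacci (k+1) * m^2 + (tribonacci (k+2) - tribonacci (k+1)) * m + tribonacci k)
  | 0 => by norm_num [tribonacci]
  | k+1 => by
    obtain ⟨q, hq⟩ := key m k
    refine ⟨m * q + tribonacci (k+1), ?_⟩
    have h3 : tribonacci (k+3) = tribonacci (k+2) + tribonacci (k+1) + tribonacci k := rfl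
    rw [show k+1+2 = k+3 from rfl, h3]
    linear_combination m * hq

theorem stmt_19 (n : ℕ) (hn : 1 ≤ n) :
    tribonacci n =
      ((2 : ℤ) ^ (n ^ 2 + n) % ((2 : ℤ) ^ (3 * n) - 2 ^ (2 * n) - 2 ^ n - 1)) % (2 : ℤ) ^ n := by
  match n, hn with
  | 1, _ => norm_num [tribonacci]
  | 2, _ => norm_num [tribonacci]
  | (k+3), _ =>
    set n := k + 3 with hn3
    set m : ℤ := 2^n with hm
    set y : ℤ := 2^k with hy
    have hmy : m = 8 * y := by rw [hm, hy, hn3, pow_add]; ring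
    have hy1 : (1:ℤ) ≤ y := by rw [hy]; exact one_le_pow₀ one_le_two
    -- abbreviations
    set a := tribonacci (n+1) with ha
    set b := tribonacci (n+2) with hb
    set c := tribonacci n with hc
    set P : ℤ := a * m^2 + (b - a) * m + c with hP
    set M : ℤ := m^3 - m^2 - m - 1 with hM
    have hA : a ≤ 4 * y := by
      have := trib_le (k+2)
      have : tribonacci (n+1) ≤ 2^(k+2) := this
      calc a ≤ 2^(k+2) := this
        _ = 4 * y := by rw [hy]; ring
    have hB : b ≤ 8 * y := by
      have : tribonacci (n+2) ≤ 2^(k+3) := trib_le (k+3)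
      calc b ≤ 2^(k+3) := this
        _ = 8 * y := by rw [hy]; ring
    have hC : c ≤ 2 * y := by
      have : tribonacci n ≤ 2^(k+1) := trib_le (k+1)
      calc c ≤ 2^(k+1) := this
        _ = 2 * y := by rw [hy]; ring
    have hA0 : 0 ≤ a := trib_nonneg _
    have hC0 : 0 ≤ c := trib_nonneg _
    have hab : a ≤ b := trib_mono (n+1)
    have hclt : c < m := trib_lt n
    -- P bounds
    have hP0 : 0 ≤ P := by
      have h1 : (0:ℤ) ≤ m := by positivity
      have h2 : (0:ℤ) ≤ m^2 := by positivity
      have := mul_nonneg hA0 h2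
      have := mul_nonneg (by linarith : (0:ℤ) ≤ b - a) h1
      rw [hP]; linarith
    have hPM : P < M := by
      rw [hP, hM, hmy]
      nlinarith [sq_nonneg y, mul_pos (by linarith : (0:ℤ) < y) (by linarith : (0:ℤ) < y),
        mul_le_mul_of_nonneg_right hA (by positivity : (0:ℤ) ≤ (8*y)^2),
        mul_le_mul_of_nonneg_right hB (by linarith : (0:ℤ) ≤ 8*y),
        mul_nonneg (mul_nonneg hA0 (by linarith : (0:ℤ) ≤ y)) (by linarith : (0:ℤ) ≤ y)]
    -- rewrite the power
    have hpow : (2:ℤ)^(n^2+n) = m^(n+1) := by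
      rw [hm, ← pow_mul]
      congr 1
      ring
    have hM3 : (2:ℤ)^(3*n) - 2^(2*n) - 2^n - 1 = M := by
      rw [hM, hm, ← pow_mul, ← pow_mul]
      ring_nf
    obtain ⟨q, hq⟩ := key m n
    have heq : (2:ℤ)^(n^2+n) = P + M * q := by
      rw [hpow]
      rw [hM, hP, ha, hb, hc]
      linarith [hq]
    rw [hM3, heq, Int.add_mul_emod_self_left, Int.emod_eq_of_lt hP0 hPM]
    have hPdec : P = c + (a * m + (b - a)) * m := by rw [hP]; ring
    rw [hPdec, Int.add_mul_emod_self_right, Int.emod_eq_of_lt hC0 hclt]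
end
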